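/- Let Φ be a symmetric bilinear form on ℝⁿ and x ∈ ℝⁿ with Φ(x,x) > 0. Suppose the restriction of Φ to every 2-dimensional subspace containing x has signature (+,−) or (+,0) (i.e. is not positive definite). Then Φ has exactly one positive eigenvalue, and it is simple. -/

import Mathlib

set_option maxHeartbeats 1000000

open Matrix

private lemma keyB (n : ℕ) (A : Matrix (Fin n) (Fin n) ℝ) (hA : A.IsHermitian)
    (u v : Fin n → ℝ) :
    u ⬝ᵥ A.mulVec v = ∑ i, hA.eigenvalues i *
      (((hA.eigenvectorUnitary : Matrix (Fin n) (Fin n) ℝ))ᵀ *ᵥ u) i *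
      (((hA.eigenvectorUnitary : Matrix (Fin n) (Fin n) ℝ))ᵀ *ᵥ v) i := by
  set U := (hA.eigenvectorUnitary : Matrix (Fin n) (Fin n) ℝ) with hU
  have hstar : star U = Uᵀ := U.conjTranspose_eq_transpose_of_trivial
  conv_lhs => rw [hA.spectral_theorem, Unitary.conjStarAlgAut_apply, ← hU, hstar]
  rw [← mulVec_mulVec, ← mulVec_mulVec, dotProduct_mulVec, ← mulVec_transpose]
  simp [dotProduct, mulVec_diagonal, Finset.mul_sum]
  ring_nf
  apply Finset.sum_congr rfl
  intro i _
  ring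

theorem stmt_4 (n : ℕ) (A : Matrix (Fin n) (Fin n) ℝ) (hA : A.IsHermitian)
    (x : Fin n → ℝ) (hx : 0 < x ⬝ᵥ A.mulVec x)
    (h2 : ∀ L : Submodule ℝ (Fin n → ℝ), x ∈ L → Module.finrank ℝ L = 2 →
      ∃ y ∈ L, y ≠ 0 ∧ y ⬝ᵥ A.mulVec y ≤ 0) :
    (Finset.univ.filter fun i => 0 < hA.eigenvalues i).card = 1 := by
  set U := (hA.eigenvectorUnitary : Matrix (Fin n) (Fin n) ℝ) with hU
  set lam := hA.eigenvalues with hlam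
  set z : (Fin n → ℝ) → (Fin n → ℝ) := fun v => Uᵀ *ᵥ v with hz
  have key : ∀ u v, u ⬝ᵥ A.mulVec v = ∑ i, lam i * z u i * z v i := fun u v =>
    keyB n A hA u v
  -- symmetry of the form
  have Bsymm : ∀ u v, u ⬝ᵥ A.mulVec v = v ⬝ᵥ A.mulVec u := by
    intro u v
    rw [key, key]
    exact Finset.sum_congr rfl fun i _ => by ring
  -- z of a column of U is a standard basis vector
  have hUU : Uᵀ * U = 1 := by
    have := Unitary.coe_star_mul_self hA.eigenvectorUnitary
    rwa [Matrix.star_eq_conjTranspose, conjTranspose_eq_transpose_of_trivial] at this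
  have hzcol : ∀ j : Fin n, z (U *ᵥ Pi.single j 1) = Pi.single j 1 := by
    intro j
    simp only [hz, mulVec_mulVec, hUU, one_mulVec]
  -- existence of a positive eigenvalue
  have hex : ∃ i, 0 < lam i := by
    by_contra h
    push_neg at h
    have : x ⬝ᵥ A.mulVec x ≤ 0 := by
      rw [key]
      apply Finset.sum_nonpos
      intro i _
      have : lam i * z x i * z x i = lam i * (z x i)^2 := by ring
      rw [this]
      exact mul_nonpos_of_nonpos_of_nonneg (h i) (sq_nonneg _)
    linarith
  obtain ⟨i0, hi0⟩ := hex
  -- uniqueness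
  have huniq : ∀ j, 0 < lam j → j = i0 := by
    intro j0 hj0
    by_contra hne
    -- two positive eigenvalues: build a 2-plane through x where the form is positive definite
    set u : Fin n → ℝ := U *ᵥ Pi.single i0 1 with hu
    set w : Fin n → ℝ := U *ᵥ Pi.single j0 1 with hw
    have hzu : z u = Pi.single i0 1 := hzcol i0
    have hzw : z w = Pi.single j0 1 := hzcol j0
    have hzlin : ∀ (a b : ℝ) (p q : Fin n → ℝ), z (a • p + b • q) = a • z p + b • z q := by
      intro a b p q
      simp only [hz, mulVec_add, mulVec_smul]
    set a := x ⬝ᵥ A.mulVec u with ha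
    set b := x ⬝ᵥ A.mulVec w with hb
    set v : Fin n → ℝ := if a = 0 ∧ b = 0 then u else b • u + (-a) • w with hv
    -- basic computations of the form on u, w
    have Qsingle : ∀ (c d : ℝ),
        (∑ i, lam i * (c • (Pi.single i0 1 : Fin n → ℝ) + d • (Pi.single j0 1 : Fin n → ℝ)) i *
          (c • (Pi.single i0 1 : Fin n → ℝ) + d • (Pi.single j0 1 : Fin n → ℝ)) i) = lam i0 * c^2 + lam j0 * d^2 := by
      intro c d
      rw [Finset.sum_eq_add_of_mem i0 j0 (Finset.mem_univ _) (Finset.mem_univ _) (Ne.symm hne)]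
      · simp [Pi.single_apply, hne, Ne.symm hne]
        ring
      · intro k _ hk
        simp [Pi.single_apply, hk.1, hk.2]
    have hzv : z v = (if a = 0 ∧ b = 0 then (1:ℝ) else b) • (Pi.single i0 1 : Fin n → ℝ) +
        (if a = 0 ∧ b = 0 then (0:ℝ) else (-a)) • (Pi.single j0 1 : Fin n → ℝ) := by
      by_cases hc : a = 0 ∧ b = 0
      · simp [hv, hc, hzu]
      · simp only [hv, if_neg hc, hzlin, hzu, hzw]
    -- Q(v) > 0
    have hQv : 0 < v ⬝ᵥ A.mulVec v := by
      rw [key, hzv, Qsingle]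
      by_cases hc : a = 0 ∧ b = 0
      · simp only [if_pos hc, one_pow, mul_one]
        nlinarith [mul_nonneg hj0.le (sq_nonneg (0:ℝ))]
      · simp only [if_neg hc]
        rcases not_and_or.mp hc with h | h
        · have h1 : 0 < lam j0 * (-a)^2 :=
            mul_pos hj0 (sq_pos_of_ne_zero (neg_ne_zero.mpr h))
          nlinarith [mul_nonneg hi0.le (sq_nonneg b)]
        · have h1 : 0 < lam i0 * b^2 := mul_pos hi0 (sq_pos_of_ne_zero h)
          nlinarith [mul_nonneg hj0.le (sq_nonneg (-a))]
    -- B(x, v) = 0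
    have hBxv : x ⬝ᵥ A.mulVec v = 0 := by
      by_cases hc : a = 0 ∧ b = 0
      · simp only [hv, if_pos hc, ← ha]
        exact hc.1
      · simp only [hv, if_neg hc, mulVec_add, mulVec_smul, dotProduct_add, dotProduct_smul,
          ← ha, ← hb, smul_eq_mul]
        ring
    have hv0 : v ≠ 0 := by
      intro h0
      rw [h0, zero_dotProduct] at hQv
      exact lt_irrefl 0 hQv
    -- x and v are linearly independent
    have hind : LinearIndependent ℝ ![x, v] := by
      rw [LinearIndependent.pair_iff]
      intro s t hst
      have h1 : (s • x + t • v) ⬝ᵥ A.mulVec x = 0 := by rw [hst]; simp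
      rw [add_dotProduct, smul_dotProduct, smul_dotProduct, Bsymm v x] at h1
      rw [hBxv] at h1
      simp only [smul_eq_mul, mul_zero, add_zero] at h1
      have hs : s = 0 := by
        rcases mul_eq_zero.mp h1 with h | h
        · exact h
        · linarith
      refine ⟨hs, ?_⟩
      rw [hs, zero_smul, zero_add] at hst
      by_contra ht
      exact hv0 (by simpa [ht] using hst.symm ▸ (smul_eq_zero.mp hst).resolve_left ht)
    set L : Submodule ℝ (Fin n → ℝ) := Submodule.span ℝ {x, v} with hL
    have hxL : x ∈ L := Submodule.subset_span (by simp)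
    have hrank : Module.finrank ℝ L = 2 := by
      have hrange : Set.range ![x, v] = {x, v} := by
        simp [Matrix.range_cons, Matrix.range_empty, Set.pair_comm]
      rw [hL, ← hrange, finrank_span_eq_card hind, Fintype.card_fin]
    obtain ⟨y, hyL, hy0, hyQ⟩ := h2 L hxL hrank
    obtain ⟨s, t, hst⟩ := Submodule.mem_span_pair.mp hyL
    have hQy : 0 < y ⬝ᵥ A.mulVec y := by
      rw [← hst]
      rw [add_dotProduct, smul_dotProduct, smul_dotProduct, mulVec_add, mulVec_smul, mulVec_smul,
        dotProduct_add, dotProduct_add, dotProduct_smul, dotProduct_smul, dotProduct_smul,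
        dotProduct_smul, Bsymm v x, hBxv]
      simp only [smul_eq_mul, mul_zero, add_zero]
      have hst0 : s ≠ 0 ∨ t ≠ 0 := by
        by_contra h
        push_neg at h
        apply hy0
        rw [← hst, h.1, h.2]
        simp
      rcases hst0 with h | h
      · nlinarith [mul_pos (mul_self_pos.mpr h) hx, mul_nonneg (mul_self_nonneg t) hQv.le]
      · nlinarith [mul_pos (mul_self_pos.mpr h) hQv, mul_nonneg (mul_self_nonneg s) hx.le]
    linarith
  rw [Finset.card_eq_one]
  exact ⟨i0, Finset.eq_singleton_iff_unique_mem.mpr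
    ⟨Finset.mem_filter.mpr ⟨Finset.mem_univ _, hi0⟩,
      fun j hj => huniq j (Finset.mem_filter.mp hj).2⟩⟩
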